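/- Let M be a linear map on n×n complex matrices that is trace-preserving and positivity-preserving, and let M' be the map M'(ρ) = Tr(ρ)·Y for a fixed matrix Y with Tr(Y) = 1. If the map M − κ·M' is positivity-preserving for some κ ≥ 0, then for all density matrices ρ, σ we have ‖M(σ − ρ)‖₁ ≤ (1 − κ)·‖σ − ρ‖₁, where ‖·‖₁ denotes the trace norm. -/

import Mathlib

open Matrix ComplexOrder

/-- Trace norm `‖A‖₁ = Tr √(Aᴴ A)`. -/
noncomputable def traceNorm {n : Type*} [Fintype n] [DecidableEq n]
    (A : Matrix n n ℂ) : ℝ :=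
  (let hA := Matrix.posSemidef_conjTranspose_mul_self A
   (hA.1.eigenvectorUnitary : Matrix n n ℂ) * diagonal (((↑) : ℝ → ℂ) ∘ (√·) ∘ hA.1.eigenvalues) *
     (star hA.1.eigenvectorUnitary : Matrix n n ℂ)).trace.re


/-- A density matrix: positive semidefinite with trace 1. -/
def IsDensityMatrix {n : Type*} [Fintype n] [DecidableEq n] (ρ : Matrix n n ℂ) : Prop :=
  ρ.PosSemidef ∧ ρ.trace = 1

section helpers
variable {m : Type*} [Fintype m] [DecidableEq m]

lemma traceNorm_eq_cfc (A : Matrix m m ℂ) :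
    traceNorm A = (cfc Real.sqrt (Aᴴ * A)).trace.re := by
  rw [traceNorm, (Matrix.posSemidef_conjTranspose_mul_self A).1.cfc_eq, Matrix.IsHermitian.cfc,
    Unitary.conjStarAlgAut_apply]
  rfl

lemma trace_re_nonneg {A : Matrix m m ℂ} (hA : A.PosSemidef) : 0 ≤ A.trace.re := by
  have h : (0:ℂ) ≤ A.trace := by
    rw [Matrix.trace]
    refine Finset.sum_nonneg fun i _ => ?_
    exact hA.diag_nonneg
  exact (Complex.le_def.mp h).1

lemma conj_trace' {U : Matrix m m ℂ} (hU : Uᴴ * U = 1) (X : Matrix m m ℂ) :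
    (U * X * Uᴴ).trace = X.trace := by
  rw [Matrix.trace_mul_comm (U * X) Uᴴ, ← Matrix.mul_assoc, hU, Matrix.one_mul]

lemma trace_re_congr_le {A P : Matrix m m ℂ} (hA : A.PosSemidef)
    (hPH : Pᴴ = P) (hP2 : P * P = P) : (P * A * P).trace.re ≤ A.trace.re := by
  have h1 : (P * A * P).trace = (P * A).trace := by
    rw [Matrix.trace_mul_comm (P * A) P, ← Matrix.mul_assoc, hP2]
  have hC : ((1 - P) * A * (1 - P)).PosSemidef := by
    have := hA.mul_mul_conjTranspose_same (1 - P)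
    rwa [conjTranspose_sub, conjTranspose_one, hPH] at this
  have h2 : ((1 - P) * A * (1 - P)).trace = A.trace - (P * A).trace := by
    rw [Matrix.trace_mul_comm ((1 - P) * A) (1 - P), ← Matrix.mul_assoc,
      Matrix.sub_mul, Matrix.mul_sub, Matrix.mul_sub, Matrix.one_mul, Matrix.mul_one,
      hP2]
    simp [Matrix.sub_mul, Matrix.mul_sub, Matrix.trace_sub]
  have h3 := trace_re_nonneg hC
  rw [h2, Complex.sub_re] at h3
  rw [h1]
  linarith

lemma dom_half {A B P E : Matrix m m ℂ} (hA : A.PosSemidef) (hB : B.PosSemidef)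
    (hEH : Eᴴ = E) (hE2 : E * E = E) (hP : E * (A - B) * E = P) :
    P.trace.re ≤ A.trace.re := by
  have hBP : (E * B * E).PosSemidef := by
    have := hB.mul_mul_conjTranspose_same E
    rwa [hEH] at this
  have h1 : P = E * A * E - E * B * E := by
    rw [← hP, Matrix.mul_sub, Matrix.sub_mul]
  calc P.trace.re = (E * A * E).trace.re - (E * B * E).trace.re := by
        rw [h1, Matrix.trace_sub, Complex.sub_re]
    _ ≤ (E * A * E).trace.re := by linarith [trace_re_nonneg hBP]
    _ ≤ A.trace.re := trace_re_congr_le hA hEH hE2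

lemma jordan {D : Matrix m m ℂ} (hD : D.IsHermitian) :
    ∃ P Q : Matrix m m ℂ, P.PosSemidef ∧ Q.PosSemidef ∧ D = P - Q ∧
      traceNorm D = P.trace.re + Q.trace.re ∧
      ∀ A B : Matrix m m ℂ, A.PosSemidef → B.PosSemidef → D = A - B →
        P.trace.re ≤ A.trace.re ∧ Q.trace.re ≤ B.trace.re := by
  set U : Matrix m m ℂ := (hD.eigenvectorUnitary : Matrix m m ℂ) with hUdef
  set lam : m → ℝ := hD.eigenvalues with hlam
  have hUU : Uᴴ * U = 1 := by
    have := (Matrix.mem_unitaryGroup_iff').mp hD.eigenvectorUnitary.2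
    simpa [Matrix.star_eq_conjTranspose] using this
  have hmul : ∀ a b : m → ℂ,
      (U * diagonal a * Uᴴ) * (U * diagonal b * Uᴴ)
        = U * diagonal (fun i => a i * b i) * Uᴴ := by
    intro a b
    simp only [Matrix.mul_assoc]
    rw [← Matrix.mul_assoc Uᴴ U, hUU, Matrix.one_mul,
      ← Matrix.mul_assoc (diagonal a) (diagonal b), diagonal_mul_diagonal]
  have hspec : D = U * diagonal (fun i => (lam i : ℂ)) * Uᴴ := by
    have := hD.spectral_theorem
    simpa [Matrix.star_eq_conjTranspose, Function.comp_def] using this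
  have hPSD : ∀ d : m → ℝ, (∀ i, 0 ≤ d i) →
      (U * diagonal (fun i => (d i : ℂ)) * Uᴴ).PosSemidef := by
    intro d hd
    exact (Matrix.PosSemidef.diagonal fun i => Complex.zero_le_real.2 (hd i)
      ).mul_mul_conjTranspose_same U
  set dp : m → ℝ := fun i => max (lam i) 0 with hdp
  set dm : m → ℝ := fun i => max (-lam i) 0 with hdm
  set P : Matrix m m ℂ := U * diagonal (fun i => (dp i : ℂ)) * Uᴴ with hPdef
  set Q : Matrix m m ℂ := U * diagonal (fun i => (dm i : ℂ)) * Uᴴ with hQdef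
  have htrace : ∀ d : m → ℝ, (U * diagonal (fun i => (d i : ℂ)) * Uᴴ).trace.re
      = ∑ i, d i := by
    intro d
    rw [conj_trace' hUU, Matrix.trace_diagonal]
    simp
  refine ⟨P, Q, hPSD dp (fun i => le_max_right _ _), hPSD dm (fun i => le_max_right _ _),
    ?_, ?_, ?_⟩
  · rw [hPdef, hQdef, ← Matrix.sub_mul, ← Matrix.mul_sub, diagonal_sub]
    rw [show (fun i => ((dp i : ℂ)) - ((dm i : ℂ))) = fun i => ((lam i : ℝ) : ℂ) by
      funext i
      rw [← Complex.ofReal_sub, max_zero_sub_max_neg_zero_eq_self]]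
    exact hspec
  · have habs : (U * diagonal (fun i => ((|lam i| : ℝ) : ℂ)) * Uᴴ)
        = cfc Real.sqrt (Dᴴ * D) := by
      have hsa : IsSelfAdjoint D := hD
      rw [hD.eq, ← pow_two, ← cfc_pow_id (R := ℝ) D 2, ← cfc_comp Real.sqrt (· ^ 2) D,
        show (Real.sqrt ∘ (· ^ 2 : ℝ → ℝ)) = abs from funext fun x => Real.sqrt_sq_eq_abs x,
        hD.cfc_eq, Matrix.IsHermitian.cfc, Unitary.conjStarAlgAut_apply]
      rfl
    rw [traceNorm_eq_cfc, ← habs, htrace (fun i => |lam i|), hPdef, hQdef,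
      htrace dp, htrace dm, ← Finset.sum_add_distrib]
    exact Finset.sum_congr rfl fun i _ =>
      (max_zero_add_max_neg_zero_eq_abs_self (lam i)).symm
  · intro A B hA hB hAB
    have hermProj : ∀ e : m → ℂ, (∀ i, star (e i) = e i) →
        (U * diagonal e * Uᴴ)ᴴ = U * diagonal e * Uᴴ := by
      intro e he
      rw [conjTranspose_mul, conjTranspose_mul, conjTranspose_conjTranspose,
        diagonal_conjTranspose, ← Matrix.mul_assoc,
        show star e = e from funext he]
    constructor
    · set e : m → ℂ := fun i => if 0 < lam i then 1 else 0 with he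
      have hEH := hermProj e (fun i => by by_cases h : 0 < lam i <;> simp [he, h])
      have hE2 : (U * diagonal e * Uᴴ) * (U * diagonal e * Uᴴ) = U * diagonal e * Uᴴ := by
        rw [hmul, show (fun i => e i * e i) = e by
          funext i; by_cases h : 0 < lam i <;> simp [he, h]]
      have hPP : (U * diagonal e * Uᴴ) * (A - B) * (U * diagonal e * Uᴴ) = P := by
        rw [← hAB, hspec, hmul, hmul, hPdef,
          show (fun i => e i * ((lam i : ℝ) : ℂ) * e i) = fun i => ((dp i : ℝ) : ℂ) by
            funext i
            by_cases h : 0 < lam i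
            · simp [he, h, hdp, max_eq_left h.le]
            · simp [he, h, hdp, max_eq_right (not_lt.1 h)]]
      exact dom_half hA hB hEH hE2 hPP
    · set e : m → ℂ := fun i => if lam i < 0 then 1 else 0 with he
      have hEH := hermProj e (fun i => by by_cases h : lam i < 0 <;> simp [he, h])
      have hE2 : (U * diagonal e * Uᴴ) * (U * diagonal e * Uᴴ) = U * diagonal e * Uᴴ := by
        rw [hmul, show (fun i => e i * e i) = e by
          funext i; by_cases h : lam i < 0 <;> simp [he, h]]
      have hspec' : B - A = U * diagonal (fun i => -((lam i : ℝ) : ℂ)) * Uᴴ := by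
        have h1 : B - A = -D := by rw [hAB, neg_sub]
        rw [h1, hspec, ← Matrix.neg_mul, ← Matrix.mul_neg, diagonal_neg]
      have hQQ : (U * diagonal e * Uᴴ) * (B - A) * (U * diagonal e * Uᴴ) = Q := by
        rw [hspec', hmul, hmul, hQdef,
          show (fun i => e i * -((lam i : ℝ) : ℂ) * e i) = fun i => ((dm i : ℝ) : ℂ) by
            funext i
            by_cases h : lam i < 0
            · rw [hdm]
              simp only [he, if_pos h, one_mul, mul_one]
              rw [max_eq_left (by linarith : (0:ℝ) ≤ -lam i)]
              push_cast
              ring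
            · rw [hdm]
              simp only [he, if_neg h]
              rw [max_eq_right (by simpa using not_lt.1 h : -lam i ≤ 0)]
              simp]
      exact dom_half hB hA hEH hE2 hQQ

lemma traceNorm_sub_le {A B : Matrix m m ℂ} (hA : A.PosSemidef) (hB : B.PosSemidef) :
    traceNorm (A - B) ≤ A.trace.re + B.trace.re := by
  obtain ⟨P, Q, _, _, _, htn, hdom⟩ := jordan (hA.1.sub hB.1)
  obtain ⟨h1, h2⟩ := hdom A B hA hB rfl
  rw [htn]
  linarith

end helpers

theorem contraction_of_positive_difference {n : ℕ}
    (M M' : Matrix (Fin n) (Fin n) ℂ →ₗ[ℂ] Matrix (Fin n) (Fin n) ℂ)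
    (Y : Matrix (Fin n) (Fin n) ℂ) (hY : Y.trace = 1)
    (hM' : ∀ A, M' A = A.trace • Y)
    (hTP : ∀ A, (M A).trace = A.trace)
    (hPosM : ∀ A, A.PosSemidef → (M A).PosSemidef)
    (κ : ℝ) (hκ : 0 ≤ κ)
    (hPosDiff : ∀ A, A.PosSemidef → (M A - (κ : ℂ) • M' A).PosSemidef)
    (ρ σ : Matrix (Fin n) (Fin n) ℂ)
    (hρ : IsDensityMatrix ρ) (hσ : IsDensityMatrix σ) :
    traceNorm (M (σ - ρ)) ≤ (1 - κ) * traceNorm (σ - ρ) := by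
  obtain ⟨hρP, hρt⟩ := hρ
  obtain ⟨hσP, hσt⟩ := hσ
  have hD : (σ - ρ).IsHermitian := hσP.1.sub hρP.1
  obtain ⟨P, Q, hP, hQ, hPQ, htn, hdom⟩ := jordan hD
  have htrPQ : P.trace = Q.trace := by
    have h0 : (σ - ρ).trace = 0 := by rw [Matrix.trace_sub, hσt, hρt, sub_self]
    rw [hPQ, Matrix.trace_sub] at h0
    exact sub_eq_zero.mp h0
  set A : Matrix (Fin n) (Fin n) ℂ := M P - (κ : ℂ) • M' P with hAdef
  set B : Matrix (Fin n) (Fin n) ℂ := M Q - (κ : ℂ) • M' Q with hBdef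
  have hApsd : A.PosSemidef := hPosDiff P hP
  have hBpsd : B.PosSemidef := hPosDiff Q hQ
  have hMD : M (σ - ρ) = A - B := by
    rw [hPQ, map_sub, hAdef, hBdef, hM' P, hM' Q, htrPQ, sub_sub_sub_cancel_right]
  have hAtr : A.trace = (1 - (κ : ℂ)) * P.trace := by
    rw [hAdef, Matrix.trace_sub, Matrix.trace_smul, hM' P, Matrix.trace_smul, hY, hTP]
    simp only [smul_eq_mul, mul_one]
    ring
  have hBtr : B.trace = (1 - (κ : ℂ)) * Q.trace := by
    rw [hBdef, Matrix.trace_sub, Matrix.trace_smul, hM' Q, Matrix.trace_smul, hY, hTP]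
    simp only [smul_eq_mul, mul_one]
    ring
  have hre : ∀ z : ℂ, ((1 - (κ : ℂ)) * z).re = (1 - κ) * z.re := by
    intro z
    rw [show (1 - (κ : ℂ)) = ((1 - κ : ℝ) : ℂ) by push_cast; ring]
    simp [Complex.mul_re]
  calc traceNorm (M (σ - ρ)) = traceNorm (A - B) := by rw [hMD]
    _ ≤ A.trace.re + B.trace.re := traceNorm_sub_le hApsd hBpsd
    _ = (1 - κ) * (P.trace.re + Q.trace.re) := by
        rw [hAtr, hBtr, hre, hre]; ring
    _ = (1 - κ) * traceNorm (σ - ρ) := by rw [htn]
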